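/- Let I ⊆ S be a nonzero saturated Borel ideal and ≺ a term order. If I is a segment ideal w.r.t. ≺ then I is a hilb-segment ideal w.r.t. ≺; if I is a hilb-segment ideal w.r.t. ≺ then I is a reg-segment ideal w.r.t. ≺; and if I is a reg-segment ideal w.r.t. ≺ then I is a gen-segment ideal w.r.t. ≺. -/

import Mathlib

open Polynomial

/-- Exponent vectors of monomials (terms) of `S = K[x_0, …, x_n]`. -/
abbrev Expo (n : ℕ) := Fin (n + 1) → ℕ

/-- The degree of a term. -/
def deg {n : ℕ} (α : Expo n) : ℕ := ∑ i, α i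

/-- The exponent vector of the variable `x_i`. -/
def sing {n : ℕ} (i : Fin (n + 1)) : Expo n := Pi.single i 1

/-- `MoveDown α β` : the term `α` is obtained from `β` by an elementary move `e_j^-`,
i.e. `α = x_{j-1}·β/x_j` for some `j ≥ 1` with `β_j > 0`. -/
def MoveDown {n : ℕ} (α β : Expo n) : Prop :=
  ∃ j k : Fin (n + 1), (k : ℕ) + 1 = (j : ℕ) ∧ α + sing j = β + sing k

/-- The Borel (partial) order `α <_B β` : transitive closure of elementary moves `e_j^-`. -/
def BorelLt {n : ℕ} (α β : Expo n) : Prop := Relation.TransGen MoveDown α β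

/-- A Borel set: a set of terms closed upwards under the Borel order. -/
def IsBorelSet {n : ℕ} (B : Set (Expo n)) : Prop :=
  ∀ α β : Expo n, α ∈ B → MoveDown α β → β ∈ B

/-- A monomial ideal, identified with its set of terms: closed under multiplication
by arbitrary terms. -/
def IsMonIdeal {n : ℕ} (M : Set (Expo n)) : Prop :=
  ∀ α ∈ M, ∀ γ : Expo n, α + γ ∈ M

/-- A Borel ideal: a monomial ideal which is a Borel set in every degree. -/
def IsBorelIdeal {n : ℕ} (M : Set (Expo n)) : Prop :=
  IsMonIdeal M ∧ IsBorelSet M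

/-- `𝒩(M)_t` : the set of degree-`t` terms not lying in `M`. -/
def coIdeal {n : ℕ} (M : Set (Expo n)) (t : ℕ) : Set (Expo n) :=
  {α | deg α = t ∧ α ∉ M}

/-- `p` is the Hilbert polynomial of `S/M` : `|𝒩(M)_t| = p(t)` for all `t` large. -/
def HasHilbPoly {n : ℕ} (M : Set (Expo n)) (p : Polynomial ℚ) : Prop :=
  ∃ N : ℕ, ∀ t : ℕ, N ≤ t → ((coIdeal M t).ncard : ℚ) = p.eval (t : ℚ)

/-- Saturation for monomial ideals: a term `α` with `x_i^{k_i}·α ∈ M` for suitable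
powers of every variable already lies in `M`. -/
def IsSaturatedIdeal {n : ℕ} (M : Set (Expo n)) : Prop :=
  ∀ α : Expo n, (∀ i : Fin (n + 1), ∃ k : ℕ, α + k • sing i ∈ M) → α ∈ M

/-- A term order on the terms of `S`: a multiplicative (strict) total order with `1`
as least element and `x_0 ≺ x_1 ≺ … ≺ x_n`. -/
structure TermOrder (n : ℕ) where
  lt : Expo n → Expo n → Prop
  irrefl : ∀ a : Expo n, ¬ lt a a
  trans : ∀ a b c : Expo n, lt a b → lt b c → lt a c
  total : ∀ a b : Expo n, a ≠ b → lt a b ∨ lt b a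
  add_right : ∀ a b c : Expo n, lt a b → lt (a + c) (b + c)
  zero_lt : ∀ a : Expo n, a ≠ 0 → lt 0 a
  var_lt : ∀ i j : Fin (n + 1), i < j → lt (sing i) (sing j)

/-- `M ∩ 𝕋_t` is a segment w.r.t. the order `lt`. -/
def IsSegmentAt {n : ℕ} (lt : Expo n → Expo n → Prop) (M : Set (Expo n)) (t : ℕ) : Prop :=
  ∀ τ σ : Expo n, τ ∈ M → deg τ = t → deg σ = t → lt τ σ → σ ∈ M

/-- `M` is a segment ideal w.r.t. the order `lt`. -/
def IsSegmentIdeal {n : ℕ} (lt : Expo n → Expo n → Prop) (M : Set (Expo n)) : Prop :=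
  ∀ t : ℕ, IsSegmentAt lt M t

/-- `α` is a minimal monomial generator of the monomial ideal `M`. -/
def IsMinGen {n : ℕ} (M : Set (Expo n)) (α : Expo n) : Prop :=
  α ∈ M ∧ ∀ β γ : Expo n, β + γ = α → β ∈ M → γ = 0

/-- The ideal generated by the elements of `M` of degree `≤ s - 1`. -/
def genBelow {n : ℕ} (M : Set (Expo n)) (s : ℕ) : Set (Expo n) :=
  {x | ∃ α γ : Expo n, α ∈ M ∧ deg α < s ∧ x = α + γ}

/-- `M` is a gen-segment ideal w.r.t. `lt`: for every `s` the minimal generators of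
degree `s` are the greatest among the degree-`s` terms not in `⟨M_{≤ s-1}⟩`. -/
def IsGenSegment {n : ℕ} (lt : Expo n → Expo n → Prop) (M : Set (Expo n)) : Prop :=
  ∀ α : Expo n, IsMinGen M α → ∀ σ : Expo n, deg σ = deg α →
    σ ∉ genBelow M (deg α) → ¬ IsMinGen M σ → lt σ α

/-- `δ` is the maximal degree of a minimal monomial generator of `M`. -/
def IsMaxGenDeg {n : ℕ} (M : Set (Expo n)) (δ : ℕ) : Prop :=
  (∃ α : Expo n, IsMinGen M α ∧ deg α = δ) ∧ ∀ α : Expo n, IsMinGen M α → deg α ≤ δ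

/-- `p` is an admissible polynomial with Gotzmann decomposition of length `r`
(so `r` is its Gotzmann number):
`p(z) = ∑_{i=1}^{r} binom(z + a_i - (i-1), a_i)` with `a_1 ≥ … ≥ a_r ≥ 0`. -/
def IsGotzmannDecomp (p : Polynomial ℚ) (r : ℕ) : Prop :=
  ∃ a : Fin r → ℕ, Antitone a ∧
    ∀ t : ℕ, r ≤ t →
      p.eval (t : ℚ) = ∑ i : Fin r, ((t + a i - (i : ℕ)).choose (a i) : ℚ)

/-- An admissible polynomial: one admitting a Gotzmann decomposition. -/
def IsAdmissible (p : Polynomial ℚ) : Prop := ∃ r : ℕ, IsGotzmannDecomp p r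

/-- Setting `x_0 = x_1 = 1` in a term. -/
def trunc01 {n : ℕ} (α : Expo n) : Expo n := fun i => if (i : ℕ) ≤ 1 then 0 else α i

/-- The `x_1`-saturation of a monomial ideal: the ideal generated by the minimal
generators with `x_0 = x_1 = 1`. -/
def xOneSat {n : ℕ} (M : Set (Expo n)) : Set (Expo n) :=
  {x | ∃ α γ : Expo n, IsMinGen M α ∧ x = trunc01 α + γ}

/-- The lexicographic comparison (intended for terms of equal degree):
`α ≺_lex β` iff `α_k < β_k` at the largest index `k` where they differ. -/
def LexLt {n : ℕ} (α β : Expo n) : Prop :=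
  ∃ k : Fin (n + 1), α k < β k ∧ ∀ j : Fin (n + 1), k < j → α j = β j

/-- The reverse lexicographic comparison (intended for terms of equal degree):
`α ≺_revlex β` iff `α_h > β_h` at the smallest index `h` where they differ. -/
def RevLexLt {n : ℕ} (α β : Expo n) : Prop :=
  ∃ h : Fin (n + 1), β h < α h ∧ ∀ j : Fin (n + 1), j < h → α j = β j

/-- A graded term order. -/
def IsGraded {n : ℕ} (ord : TermOrder n) : Prop :=
  ∀ α β : Expo n, deg α < deg β → ord.lt α β

/-- A reverse term order: a graded term order such that, on terms of equal degree,
a strictly larger exponent of `x_0` makes a term strictly smaller. -/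
def IsReverseOrder {n : ℕ} (ord : TermOrder n) : Prop :=
  IsGraded ord ∧ ∀ α β : Expo n, deg α = deg β → β 0 < α 0 → ord.lt α β

section Basics

variable {n : ℕ}

lemma deg_add (α β : Expo n) : deg (α + β) = deg α + deg β := by
  simp [deg, Finset.sum_add_distrib]

lemma deg_sing (i : Fin (n + 1)) : deg (sing i) = 1 := by
  simp [deg, sing, Finset.sum_pi_single']

lemma deg_zero : deg (0 : Expo n) = 0 := by simp [deg]

lemma deg_smul (k : ℕ) (α : Expo n) : deg (k • α) = k * deg α := by
  simp [deg, Finset.mul_sum]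

lemma eq_zero_of_deg_eq_zero {α : Expo n} (h : deg α = 0) : α = 0 := by
  funext i
  have := Finset.sum_eq_zero_iff.mp h i (Finset.mem_univ i)
  simpa using this

lemma exists_pos_of_ne_zero {α : Expo n} (h : α ≠ 0) : ∃ i, 1 ≤ α i := by
  by_contra hc
  push_neg at hc
  exact h (funext fun i => by have := hc i; simp; omega)

lemma apply_le_deg (α : Expo n) (i : Fin (n + 1)) : α i ≤ deg α :=
  Finset.single_le_sum (f := fun j => α j) (fun _ _ => Nat.zero_le _) (Finset.mem_univ i)

lemma sub_add_cancel_expo {α β : Expo n} (h : ∀ i, β i ≤ α i) : (α - β) + β = α := by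
  funext i
  simpa using Nat.sub_add_cancel (h i)

lemma sing_le_of_pos {α : Expo n} {i : Fin (n + 1)} (h : 1 ≤ α i) : ∀ j, sing i j ≤ α j := by
  intro j
  by_cases hj : i = j
  · subst hj; simpa [sing] using h
  · simp [sing, Pi.single_apply, hj]

lemma deg_finite (t : ℕ) : {α : Expo n | deg α = t}.Finite := by
  apply Set.Finite.subset
    (Set.finite_range (fun g : Fin (n + 1) → Fin (t + 1) => (fun i => ((g i : ℕ)) : Expo n)))
  intro α hα
  refine ⟨fun i => ⟨α i, ?_⟩, rfl⟩
  have := apply_le_deg α i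
  simp only [Set.mem_setOf_eq] at hα
  omega

lemma coIdeal_finite (M : Set (Expo n)) (t : ℕ) : (coIdeal M t).Finite :=
  (deg_finite t).subset fun α hα => hα.1

lemma deg_eq_of_coIdeal {M : Set (Expo n)} {t : ℕ} {α : Expo n} (h : α ∈ coIdeal M t) :
    deg α = t := h.1

end Basics
section Borel

variable {n : ℕ}

lemma moveDown_step (β : Expo n) {k j : Fin (n + 1)} (h : (k : ℕ) + 1 = (j : ℕ)) :
    MoveDown (β + sing k) (β + sing j) :=
  ⟨j, k, h, by rw [add_right_comm, add_assoc, add_comm (sing j), ← add_assoc]⟩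

lemma borel_up {B : Set (Expo n)} (hB : IsBorelSet B) (β : Expo n) :
    ∀ d (j l : Fin (n + 1)), (l : ℕ) = (j : ℕ) + d → β + sing j ∈ B → β + sing l ∈ B := by
  intro d
  induction d with
  | zero =>
    intro j l hl hm
    have : l = j := Fin.ext (by omega)
    rwa [this]
  | succ d ih =>
    intro j l hl hm
    have hl' : (j : ℕ) + d < n + 1 := by have := l.isLt; omega
    set l' : Fin (n + 1) := ⟨(j : ℕ) + d, hl'⟩ with hl'def
    have h1 : β + sing l' ∈ B := ih j l' rfl hm
    exact hB _ _ h1 (moveDown_step β (by simp [hl'def]; omega))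

lemma borel_up_le {B : Set (Expo n)} (hB : IsBorelSet B) (β : Expo n) {j l : Fin (n + 1)}
    (h : j ≤ l) (hm : β + sing j ∈ B) : β + sing l ∈ B := by
  exact borel_up hB β ((l : ℕ) - (j : ℕ)) j l (by omega) hm

lemma sat0_of_saturated {I : Set (Expo n)} (hB : IsBorelSet I) (hsat : IsSaturatedIdeal I) :
    ∀ α : Expo n, α + sing 0 ∈ I → α ∈ I := by
  intro α h
  apply hsat
  intro i
  exact ⟨1, by rw [one_nsmul]; exact borel_up_le hB α (Fin.zero_le i) h⟩

lemma sat0_iter {I : Set (Expo n)} (hs0 : ∀ α : Expo n, α + sing 0 ∈ I → α ∈ I) :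
    ∀ (k : ℕ) (α : Expo n), α + k • sing 0 ∈ I → α ∈ I := by
  intro k
  induction k with
  | zero => intro α h; rwa [zero_nsmul, add_zero] at h
  | succ k ih =>
    intro α h
    apply ih
    apply hs0
    rwa [succ_nsmul, ← add_assoc] at h

/-- split a vector into a part of prescribed degree and a rest -/
lemma exists_split (k : ℕ) : ∀ (γ : Expo n), k ≤ deg γ →
    ∃ γ₁ γ₂ : Expo n, γ = γ₁ + γ₂ ∧ deg γ₁ = k := by
  induction k with
  | zero => intro γ _; exact ⟨0, γ, by simp, deg_zero⟩
  | succ k ih =>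
    intro γ hk
    have hne : γ ≠ 0 := by
      intro h
      rw [h, deg_zero] at hk; omega
    obtain ⟨l, hl⟩ := exists_pos_of_ne_zero hne
    have hsub := sub_add_cancel_expo (sing_le_of_pos hl)
    have hdeg : k ≤ deg (γ - sing l) := by
      have hd := congrArg deg hsub
      rw [deg_add, deg_sing] at hd
      omega
    obtain ⟨γ₁, γ₂, hγ, hγ₁⟩ := ih (γ - sing l) hdeg
    refine ⟨γ₁ + sing l, γ₂, ?_, by rw [deg_add, hγ₁, deg_sing]⟩
    rw [add_right_comm, ← hγ, hsub]

/-- Borel spread: if `β·x0^k` is in a Borel monomial ideal then `β·γ` is for any `γ`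
of degree `≥ k`. -/
lemma borel_spread {J : Set (Expo n)} (hmon : IsMonIdeal J) (hB : IsBorelSet J) :
    ∀ (k : ℕ) (β : Expo n), β + k • sing 0 ∈ J → ∀ γ : Expo n, deg γ = k → β + γ ∈ J := by
  intro k
  induction k with
  | zero =>
    intro β hβ γ hγ
    rw [eq_zero_of_deg_eq_zero hγ]
    simpa using hβ
  | succ k ih =>
    intro β hβ γ hγ
    have hne : γ ≠ 0 := by intro h; rw [h, deg_zero] at hγ; omega
    obtain ⟨l, hl⟩ := exists_pos_of_ne_zero hne
    have hsub := sub_add_cancel_expo (sing_le_of_pos hl)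
    have h1 : (β + k • sing 0) + sing 0 ∈ J := by
      rw [add_assoc, ← succ_nsmul]; exact hβ
    have h2 : (β + k • sing 0) + sing l ∈ J := borel_up_le hB _ (Fin.zero_le l) h1
    have h3 : (β + sing l) + k • sing 0 ∈ J := by rwa [add_right_comm] at h2
    have h4 := ih (β + sing l) h3 (γ - sing l) (by
      have hd := congrArg deg hsub
      rw [deg_add, deg_sing] at hd
      omega)
    rwa [add_assoc, add_comm (sing l), hsub] at h4

lemma borel_spread_ge {J : Set (Expo n)} (hmon : IsMonIdeal J) (hB : IsBorelSet J)
    {k : ℕ} {β : Expo n} (hβ : β + k • sing 0 ∈ J) {γ : Expo n} (hγ : k ≤ deg γ) :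
    β + γ ∈ J := by
  obtain ⟨γ₁, γ₂, h1, h2⟩ := exists_split k γ hγ
  rw [h1, ← add_assoc]
  exact hmon _ (borel_spread hmon hB k β hβ γ₁ h2) γ₂

lemma downSeg {I : Set (Expo n)} (hmon : IsMonIdeal I) (hsat : IsSaturatedIdeal I)
    (lt : Expo n → Expo n → Prop)
    (hadd : ∀ a b c : Expo n, lt a b → lt (a + c) (b + c)) (t : ℕ)
    (h : IsSegmentAt lt I (t + 1)) : IsSegmentAt lt I t := by
  intro τ σ hτ hdτ hdσ hlt
  apply hsat
  intro i
  refine ⟨1, ?_⟩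
  rw [one_nsmul]
  exact h (τ + sing i) (σ + sing i) (hmon τ hτ (sing i))
    (by rw [deg_add, deg_sing, hdτ]) (by rw [deg_add, deg_sing, hdσ]) (hadd _ _ _ hlt)

lemma downSegIter {I : Set (Expo n)} (hmon : IsMonIdeal I) (hsat : IsSaturatedIdeal I)
    (lt : Expo n → Expo n → Prop)
    (hadd : ∀ a b c : Expo n, lt a b → lt (a + c) (b + c)) :
    ∀ (d t : ℕ), IsSegmentAt lt I (t + d) → IsSegmentAt lt I t := by
  intro d
  induction d with
  | zero => intro t h; simpa using h
  | succ d ih =>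
    intro t h
    have h' : IsSegmentAt lt I (t + 1 + d) := by
      rwa [show t + 1 + d = t + (d + 1) from by omega]
    exact downSeg hmon hsat lt hadd t (ih (t + 1) h')

end Borel
section Arith
open Finset

/-- `∑_{i<r} C(t + b i - i, b i)` -/
def Fsum (b : ℕ → ℕ) (r t : ℕ) : ℕ := ∑ i ∈ Finset.range r, (t + b i - i).choose (b i)

lemma Fsum_congr {b b' : ℕ → ℕ} {r : ℕ} (h : ∀ i, i < r → b i = b' i) (t : ℕ) :
    Fsum b r t = Fsum b' r t := by
  unfold Fsum
  exact Finset.sum_congr rfl fun i hi => by rw [h i (Finset.mem_range.mp hi)]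

lemma Fsum_pos {b : ℕ → ℕ} {r : ℕ} (hr : 0 < r) (t : ℕ) : 0 < Fsum b r t := by
  unfold Fsum
  have h0 : (0 : ℕ) ∈ Finset.range r := Finset.mem_range.mpr hr
  have : 0 < (t + b 0 - 0).choose (b 0) := Nat.choose_pos (by omega)
  calc 0 < (t + b 0 - 0).choose (b 0) := this
    _ ≤ _ := Finset.single_le_sum (f := fun i => (t + b i - i).choose (b i))
      (fun _ _ => Nat.zero_le _) h0

/-- a downward-closed finset of `ℕ` is an initial range -/
lemma lower_eq_range (S : Finset ℕ) (h : ∀ i ∈ S, ∀ j, j ≤ i → j ∈ S) :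
    S = Finset.range S.card := by
  rcases S.eq_empty_or_nonempty with hS | hS
  · simp [hS]
  · have hmax := S.max'_mem hS
    have hSr : S = Finset.range (S.max' hS + 1) := by
      ext i
      simp only [Finset.mem_range]
      constructor
      · intro hi
        have := S.le_max' i hi
        omega
      · intro hi
        exact h _ hmax i (by omega)
    rw [hSr, Finset.card_range]

/-- characterization of the number `m` of positive entries of an antitone `b` -/
lemma antitone_filter_char {b : ℕ → ℕ} (hb : Antitone b) (r : ℕ) :
    ∀ i, i < ((Finset.range r).filter fun i => 1 ≤ b i).card ↔ (i < r ∧ 1 ≤ b i) := by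
  set S := (Finset.range r).filter fun i => 1 ≤ b i with hS
  have hlower : ∀ i ∈ S, ∀ j, j ≤ i → j ∈ S := by
    intro i hi j hj
    simp only [hS, Finset.mem_filter, Finset.mem_range] at hi ⊢
    exact ⟨by omega, le_trans hi.2 (hb hj)⟩
  have hrange := lower_eq_range S hlower
  intro i
  constructor
  · intro hi
    have : i ∈ S := by rw [hrange]; exact Finset.mem_range.mpr hi
    simpa [hS, Finset.mem_filter, Finset.mem_range] using this
  · intro ⟨h1, h2⟩
    have : i ∈ S := by simp [hS, Finset.mem_filter, Finset.mem_range]; exact ⟨h1, h2⟩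
    rw [hrange] at this
    exact Finset.mem_range.mp this

lemma filter_card_le (b : ℕ → ℕ) (r : ℕ) :
    ((Finset.range r).filter fun i => 1 ≤ b i).card ≤ r := by
  calc ((Finset.range r).filter fun i => 1 ≤ b i).card ≤ (Finset.range r).card :=
        Finset.card_filter_le _ _
    _ = r := Finset.card_range r

lemma sum_range_split (f : ℕ → ℕ) {m r : ℕ} (h : m ≤ r) :
    ∑ i ∈ Finset.range r, f i
      = ∑ i ∈ Finset.range m, f i + ∑ j ∈ Finset.range (r - m), f (m + j) := by
  obtain ⟨z, rfl⟩ : ∃ z, r = m + z := ⟨r - m, by omega⟩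
  rw [Finset.sum_range_add, Nat.add_sub_cancel_left]

/-- Pascal recursion for `Fsum`. -/
lemma Fsum_succ {b : ℕ → ℕ} {r m : ℕ} (hmr : m ≤ r)
    (hpos : ∀ i, i < m → 1 ≤ b i) (hzero : ∀ i, m ≤ i → i < r → b i = 0)
    {t : ℕ} (ht : ∀ i, i < r → i ≤ t) :
    Fsum b r (t + 1) = Fsum b r t + Fsum (fun i => b i - 1) m (t + 1) := by
  have e1 : ∀ j ∈ Finset.range (r - m),
      (t + 1 + b (m + j) - (m + j)).choose (b (m + j))
        = (t + b (m + j) - (m + j)).choose (b (m + j)) := by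
    intro j hj
    have hj' := Finset.mem_range.mp hj
    rw [hzero (m + j) (by omega) (by omega)]
    rw [Nat.choose_zero_right, Nat.choose_zero_right]
  have e2 : ∀ i ∈ Finset.range m,
      (t + 1 + b i - i).choose (b i)
        = (t + b i - i).choose (b i) + (t + 1 + (b i - 1) - i).choose (b i - 1) := by
    intro i hi
    have him := Finset.mem_range.mp hi
    have hbi := hpos i him
    have hit : i ≤ t := ht i (by omega)
    obtain ⟨c, hc⟩ : ∃ c, b i = c + 1 := ⟨b i - 1, by omega⟩
    have hX1 : t + 1 + b i - i = ((t + c - i) + 1) + 1 := by omega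
    have hX : t + b i - i = (t + c - i) + 1 := by omega
    have hX2 : t + 1 + (b i - 1) - i = (t + c - i) + 1 := by omega
    rw [hX, hX1, hX2, hc, Nat.add_sub_cancel]
    exact (Nat.choose_succ_succ' ((t + c - i) + 1) c).trans (add_comm _ _)
  unfold Fsum
  calc ∑ i ∈ Finset.range r, (t + 1 + b i - i).choose (b i)
      = ∑ i ∈ Finset.range m, (t + 1 + b i - i).choose (b i)
          + ∑ j ∈ Finset.range (r - m), (t + 1 + b (m+j) - (m+j)).choose (b (m+j)) :=
        sum_range_split _ hmr
    _ = ∑ i ∈ Finset.range m,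
          ((t + b i - i).choose (b i) + (t + 1 + (b i - 1) - i).choose (b i - 1))
          + ∑ j ∈ Finset.range (r - m), (t + b (m+j) - (m+j)).choose (b (m+j)) := by
        rw [Finset.sum_congr rfl e2, Finset.sum_congr rfl e1]
    _ = (∑ i ∈ Finset.range m, (t + b i - i).choose (b i)
          + ∑ j ∈ Finset.range (r - m), (t + b (m+j) - (m+j)).choose (b (m+j)))
          + ∑ i ∈ Finset.range m, (t + 1 + (b i - 1) - i).choose (b i - 1) := by
        rw [Finset.sum_add_distrib]
        ring
    _ = ∑ i ∈ Finset.range r, (t + b i - i).choose (b i)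
          + ∑ i ∈ Finset.range m, (t + 1 + (b i - 1) - i).choose (b i - 1) := by
        rw [← sum_range_split (fun i => (t + b i - i).choose (b i)) hmr]

/-- constant-part split of `Fsum`. -/
lemma Fsum_split {b : ℕ → ℕ} {r m : ℕ} (hmr : m ≤ r)
    (hzero : ∀ i, m ≤ i → i < r → b i = 0) (t : ℕ) :
    Fsum b r t = Fsum b m t + (r - m) := by
  unfold Fsum
  rw [sum_range_split _ hmr]
  congr 1
  have e1 : ∀ j ∈ Finset.range (r - m),
      (t + b (m + j) - (m + j)).choose (b (m + j)) = 1 := by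
    intro j hj
    have hj' := Finset.mem_range.mp hj
    rw [hzero (m + j) (by omega) (by omega), Nat.choose_zero_right]
  rw [Finset.sum_congr rfl e1, Finset.sum_const, Finset.card_range, smul_eq_mul, mul_one]

/-- hockey-stick summation for `Fsum` with all entries positive. -/
lemma Fsum_hockey {b : ℕ → ℕ} {r : ℕ} (hpos : ∀ i, i < r → 1 ≤ b i) (t : ℕ) :
    ∑ s ∈ Finset.range (t + 1), Fsum b r s = Fsum (fun i => b i + 1) r t := by
  unfold Fsum
  rw [Finset.sum_comm]
  apply Finset.sum_congr rfl
  intro i hi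
  have hir := Finset.mem_range.mp hi
  have hbi := hpos i hir
  by_cases hit : t < i
  · have hL : ∀ s ∈ Finset.range (t + 1), (s + b i - i).choose (b i) = 0 := by
      intro s hs
      have hs' := Finset.mem_range.mp hs
      exact Nat.choose_eq_zero_of_lt (by omega)
    rw [Finset.sum_congr rfl hL, Finset.sum_const, smul_eq_mul, mul_zero]
    exact (Nat.choose_eq_zero_of_lt (show t + (b i + 1) - i < b i + 1 by omega)).symm
  · push_neg at hit
    rw [Finset.range_eq_Ico, ← Finset.sum_Ico_consecutive _ (Nat.zero_le i) (by omega)]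
    have hL : ∀ s ∈ Finset.Ico 0 i, (s + b i - i).choose (b i) = 0 := by
      intro s hs
      have hs' := (Finset.mem_Ico.mp hs).2
      exact Nat.choose_eq_zero_of_lt (by omega)
    rw [Finset.sum_congr rfl hL, Finset.sum_const, smul_eq_mul, mul_zero, zero_add]
    rw [Finset.sum_Ico_eq_sum_range]
    have e1 : ∀ u ∈ Finset.range (t + 1 - i), (i + u + b i - i).choose (b i)
        = (b i + u).choose (b i) := by
      intro u _
      congr 1
      omega
    rw [Finset.sum_congr rfl e1]
    have h2 : ∑ u ∈ Finset.range (t + 1 - i), (b i + u).choose (b i)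
        = ∑ x ∈ Finset.Icc (b i) (t - i + b i), x.choose (b i) := by
      rw [← Finset.Ico_add_one_right_eq_Icc, Finset.sum_Ico_eq_sum_range]
      apply Finset.sum_congr (by congr 1; omega)
      intro u _
      rfl
    rw [h2, Nat.sum_Icc_choose]
    show (t - i + b i + 1).choose (b i + 1) = (t + (b i + 1) - i).choose (b i + 1)
    congr 1
    omega

/-- counting estimate used in the final inequality. -/
lemma arith_e3 (m E cT t : ℕ) :
    ∑ k ∈ Finset.range cT, ((t + 1) - (m + E + k))
      ≤ ∑ s ∈ Finset.range (t + 1), min cT ((s + 1) - m) := by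
  have key : ∀ k, (t + 1) - (m + E + k) = ((Finset.range (t+1)).filter
      (fun s => m + E + k ≤ s)).card := by
    intro k
    have : (Finset.range (t+1)).filter (fun s => m + E + k ≤ s)
        = Finset.Ico (m + E + k) (t + 1) := by
      ext s
      simp only [Finset.mem_filter, Finset.mem_range, Finset.mem_Ico]
      omega
    rw [this, Nat.card_Ico]
  calc ∑ k ∈ Finset.range cT, ((t + 1) - (m + E + k))
      = ∑ k ∈ Finset.range cT, ∑ s ∈ Finset.range (t+1),
          (if m + E + k ≤ s then 1 else 0) := by
        apply Finset.sum_congr rfl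
        intro k _
        rw [key k, Finset.card_filter]
    _ = ∑ s ∈ Finset.range (t+1), ∑ k ∈ Finset.range cT,
          (if m + E + k ≤ s then 1 else 0) := Finset.sum_comm
    _ ≤ ∑ s ∈ Finset.range (t + 1), min cT ((s + 1) - m) := by
        apply Finset.sum_le_sum
        intro s _
        rw [← Finset.card_filter]
        apply le_min
        · exact le_trans (Finset.card_filter_le _ _) (by rw [Finset.card_range])
        · have hsub : (Finset.range cT).filter (fun k => m + E + k ≤ s)
              ⊆ Finset.range ((s + 1) - m) := by
            intro k hk
            simp only [Finset.mem_filter, Finset.mem_range] at hk ⊢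
            omega
          exact le_trans (Finset.card_le_card hsub) (by rw [Finset.card_range])

lemma arith_e2 (m E t : ℕ) :
    ∑ j ∈ Finset.range E, ((t + 1) - (m + j)) ≤ E * ((t + 1) - (m - 1)) := by
  calc ∑ j ∈ Finset.range E, ((t + 1) - (m + j))
      ≤ ∑ _j ∈ Finset.range E, ((t + 1) - (m - 1)) := by
        apply Finset.sum_le_sum
        intro j _
        omega
    _ = E * ((t + 1) - (m - 1)) := by rw [Finset.sum_const, Finset.card_range, smul_eq_mul]

lemma indicator_sum (G : ℕ → ℕ) (E m t : ℕ) :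
    ∑ s ∈ Finset.range (t + 1), (G s + if m - 1 ≤ s then E else 0)
      = (∑ s ∈ Finset.range (t + 1), G s) + E * ((t + 1) - (m - 1)) := by
  rw [Finset.sum_add_distrib]
  congr 1
  rw [← Finset.sum_filter]
  have hfe : (Finset.range (t+1)).filter (fun s => m - 1 ≤ s) = Finset.Ico (m-1) (t+1) := by
    ext s
    simp only [Finset.mem_filter, Finset.mem_range, Finset.mem_Ico]
    omega
  rw [hfe, Finset.sum_const, Nat.card_Ico, smul_eq_mul, mul_comm]

end Arith
section Cons

variable {n : ℕ}

lemma cons_add (β γ : Expo n) :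
    (Fin.cons 0 (β + γ) : Expo (n + 1)) = Fin.cons 0 β + Fin.cons 0 γ := by
  funext i
  refine Fin.cases ?_ ?_ i
  · simp
  · intro k
    simp

lemma deg_cons (x : ℕ) (β : Expo n) : deg (Fin.cons x β : Expo (n + 1)) = x + deg β := by
  simp [deg, Fin.sum_univ_succ]

lemma cons_sing (i : Fin (n + 1)) :
    (Fin.cons 0 (sing i) : Expo (n + 1)) = sing i.succ := by
  funext j
  refine Fin.cases ?_ ?_ j
  · simp [sing, Pi.single_apply, (Fin.succ_ne_zero i).symm]
  · intro k
    simp [sing, Pi.single_apply, Fin.succ_inj]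

lemma cons_zero_expo : (Fin.cons 0 (0 : Expo n) : Expo (n + 1)) = 0 := by
  funext i
  refine Fin.cases ?_ ?_ i <;> simp

lemma cons_tail_eq {α : Expo (n + 1)} (h : α 0 = 0) : Fin.cons 0 (Fin.tail α) = α := by
  rw [← h]
  exact Fin.cons_self_tail α

lemma moveDown_cons {β β' : Expo n} (h : MoveDown β β') :
    MoveDown (Fin.cons 0 β : Expo (n + 1)) (Fin.cons 0 β') := by
  obtain ⟨j, k, hjk, heq⟩ := h
  refine ⟨j.succ, k.succ, by simp [Fin.val_succ]; omega, ?_⟩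
  rw [← cons_sing, ← cons_sing, ← cons_add, ← cons_add, heq]

lemma cons_inj : Function.Injective (fun β : Expo n => (Fin.cons 0 β : Expo (n + 1))) := by
  intro a b h
  funext i
  have := congrFun h i.succ
  simpa using this

lemma Hrec {I : Set (Expo (n + 1))} (hmon : IsMonIdeal I)
    (hs0 : ∀ α : Expo (n + 1), α + sing 0 ∈ I → α ∈ I) (t : ℕ) :
    (coIdeal I (t + 1)).ncard
      = (coIdeal I t).ncard + (coIdeal {β : Expo n | Fin.cons 0 β ∈ I} (t + 1)).ncard := by
  set J : Set (Expo n) := {β : Expo n | Fin.cons 0 β ∈ I} with hJ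
  set A : Set (Expo (n + 1)) := (fun β => β + sing 0) '' coIdeal I t with hA
  set B : Set (Expo (n + 1)) := (fun β : Expo n => (Fin.cons 0 β : Expo (n + 1))) '' coIdeal J (t + 1) with hB
  have hAB : coIdeal I (t + 1) = A ∪ B := by
    ext α
    constructor
    · rintro ⟨hdeg, hni⟩
      by_cases h0 : α 0 = 0
      · right
        refine ⟨Fin.tail α, ⟨?_, ?_⟩, cons_tail_eq h0⟩
        · have h1 := deg_cons 0 (Fin.tail α)
          rw [cons_tail_eq h0] at h1
          omega
        · intro hc
          rw [hJ, Set.mem_setOf_eq, cons_tail_eq h0] at hc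
          exact hni hc
      · left
        have h1 : 1 ≤ α 0 := by omega
        have hsub := sub_add_cancel_expo (sing_le_of_pos h1)
        refine ⟨α - sing 0, ⟨?_, ?_⟩, hsub⟩
        · have h2 := congrArg deg hsub
          rw [deg_add, deg_sing] at h2
          omega
        · intro hc
          exact hni (by rw [← hsub]; exact hmon _ hc (sing 0))
    · intro h
      rcases h with ⟨β, ⟨hd, hni⟩, rfl⟩ | ⟨β, ⟨hd, hni⟩, rfl⟩
      · exact ⟨by rw [deg_add, deg_sing, hd], fun hc => hni (hs0 β hc)⟩
      · exact ⟨by rw [deg_cons]; omega, hni⟩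
  have hdisj : Disjoint A B := by
    rw [Set.disjoint_left]
    rintro α ⟨β, _, hβeq⟩ ⟨γ, _, hγeq⟩
    simp only [] at hβeq hγeq
    have h1 : α 0 = β 0 + 1 := by rw [← hβeq]; simp [sing]
    have h2 : α 0 = 0 := by rw [← hγeq]; rfl
    omega
  have hfinA : A.Finite := (coIdeal_finite I t).image _
  have hfinB : B.Finite := (coIdeal_finite J (t + 1)).image _
  rw [hAB, Set.ncard_union_eq hdisj hfinA hfinB, hA, hB,
    Set.ncard_image_of_injective _ (add_left_injective (sing (0 : Fin (n + 2)))),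
    Set.ncard_image_of_injective _ cons_inj]

lemma Hzero {I : Set (Expo (n + 1))} :
    (coIdeal I 0).ncard = (coIdeal {β : Expo n | Fin.cons 0 β ∈ I} 0).ncard := by
  set J : Set (Expo n) := {β : Expo n | Fin.cons 0 β ∈ I} with hJ
  have h : coIdeal I 0 = (fun β : Expo n => (Fin.cons 0 β : Expo (n + 1))) '' coIdeal J 0 := by
    ext α
    constructor
    · rintro ⟨hdeg, hni⟩
      have hα := eq_zero_of_deg_eq_zero hdeg
      refine ⟨0, ⟨deg_zero, ?_⟩, by simp only []; rw [cons_zero_expo, hα]⟩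
      rw [hJ, Set.mem_setOf_eq, cons_zero_expo, ← hα]
      exact hni
    · rintro ⟨β, ⟨hd, hni⟩, rfl⟩
      exact ⟨by rw [deg_cons]; omega, hni⟩
  rw [h, Set.ncard_image_of_injective _ cons_inj]

lemma Hsum {I : Set (Expo (n + 1))} (hmon : IsMonIdeal I)
    (hs0 : ∀ α : Expo (n + 1), α + sing 0 ∈ I → α ∈ I) (t : ℕ) :
    (coIdeal I t).ncard
      = ∑ s ∈ Finset.range (t + 1), (coIdeal {β : Expo n | Fin.cons 0 β ∈ I} s).ncard := by
  induction t with
  | zero => simpa using Hzero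
  | succ t ih => rw [Finset.sum_range_succ, ← ih, Hrec hmon hs0]

lemma Hsplit {J K : Set (Expo n)} (hJK : J ⊆ K) (s : ℕ) :
    (coIdeal J s).ncard
      = (coIdeal K s).ncard + {β : Expo n | deg β = s ∧ β ∈ K ∧ β ∉ J}.ncard := by
  set D := {β : Expo n | deg β = s ∧ β ∈ K ∧ β ∉ J} with hD
  have h : coIdeal J s = coIdeal K s ∪ D := by
    ext β
    simp only [coIdeal, Set.mem_setOf_eq, Set.mem_union, hD]
    by_cases hK : β ∈ K
    · constructor
      · intro ⟨h1, h2⟩; exact Or.inr ⟨h1, hK, h2⟩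
      · rintro (⟨h1, h2⟩ | ⟨h1, _, h3⟩)
        · exact absurd hK h2
        · exact ⟨h1, h3⟩
    · constructor
      · intro ⟨h1, h2⟩; exact Or.inl ⟨h1, hK⟩
      · rintro (⟨h1, h2⟩ | ⟨h1, h2, h3⟩)
        · exact ⟨h1, fun hc => h2 (hJK hc)⟩
        · exact absurd h2 hK
  have hdisj : Disjoint (coIdeal K s) D := by
    rw [Set.disjoint_left]
    rintro β ⟨_, h2⟩ ⟨_, h3, _⟩
    exact h2 h3
  have hfinD : D.Finite := (deg_finite s).subset fun β hβ => hβ.1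
  rw [h, Set.ncard_union_eq hdisj (coIdeal_finite K s) hfinD]

end Cons
section Gap

variable {n : ℕ}

lemma gap_bounded {J : Set (Expo n)} (hmon : IsMonIdeal J) (hB : IsBorelSet J) :
    ∃ T0 : ℕ, ∀ β : Expo n, (∃ k : ℕ, β + k • sing 0 ∈ J) → β ∉ J → deg β < T0 := by
  by_contra hc
  push_neg at hc
  have hch : ∀ T : ℕ, ∃ β : Expo n,
      ((∃ k : ℕ, β + k • sing 0 ∈ J) ∧ β ∉ J) ∧ T ≤ deg β := by
    intro T
    obtain ⟨β, h1, h2, h3⟩ := hc T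
    exact ⟨β, ⟨h1, h2⟩, h3⟩
  choose f hf hdeg using hch
  obtain ⟨g, hg⟩ := (Set.isPWO_of_wellQuasiOrderedLE (Set.univ : Set (Expo n))).exists_monotone_subseq (f := f)
    (fun _ => Set.mem_univ _)
  set β := f (g 0) with hβ
  obtain ⟨k, hk⟩ := (hf (g 0)).1
  set T := deg β + k with hT
  have hle : β ≤ f (g T) := hg (Nat.zero_le T)
  have hgT : T ≤ g T := Nat.le_of_lt_succ (Nat.lt_succ_of_le (g.strictMono.le_apply))
  have hdegT : T ≤ deg (f (g T)) := le_trans hgT (hdeg (g T))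
  have hsub := sub_add_cancel_expo (fun i => hle i)
  have hdeg2 : k ≤ deg (f (g T) - β) := by
    have h2 := congrArg deg hsub
    rw [deg_add] at h2
    omega
  have : β + (f (g T) - β) ∈ J := borel_spread_ge hmon hB hk hdeg2
  rw [add_comm, hsub] at this
  exact (hf (g T)).2 this

end Gap
section Master

/-- The key combinatorial theorem: for a nonempty `x₀`-saturated Borel monomial ideal whose
Hilbert function is eventually given by a Gotzmann-type binomial expression of length `r`,
all minimal generators live in degrees `≤ r`; moreover the Hilbert function agrees with the
binomial expression from degree `r` on, and a cumulative lower bound holds. -/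
theorem master : ∀ (n : ℕ) (I : Set (Expo n)), IsMonIdeal I → IsBorelSet I → I.Nonempty →
    (∀ α : Expo n, α + sing 0 ∈ I → α ∈ I) →
    ∀ (r : ℕ) (b : ℕ → ℕ), Antitone b →
    (∃ N : ℕ, ∀ t : ℕ, N ≤ t → (coIdeal I t).ncard = Fsum b r t) →
    (∀ g : Expo n, IsMinGen I g → deg g ≤ r) ∧
    (∀ t : ℕ, r ≤ t → (coIdeal I t).ncard = Fsum b r t) ∧
    (∀ t : ℕ, Fsum (fun i => b i + 1) r t ≤ ∑ s ∈ Finset.range (t + 1), (coIdeal I s).ncard) := by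
  intro n
  induction n with
  | zero =>
    intro I hmon hB hne hs0 r b hb hHyp
    obtain ⟨N, hN⟩ := hHyp
    have h0 : (0 : Expo 0) ∈ I := by
      obtain ⟨α, hα⟩ := hne
      have hα' : (0 : Expo 0) + (α 0) • sing 0 = α := by
        funext i
        have hi0 : i = 0 := Fin.ext (by omega)
        rw [hi0]
        simp [sing]
      exact sat0_iter hs0 (α 0) 0 (by rw [hα']; exact hα)
    have hall : ∀ β : Expo 0, β ∈ I := fun β => by
      have := hmon 0 h0 β
      simpa using this
    have hH : ∀ t, (coIdeal I t).ncard = 0 := fun t => by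
      have he : coIdeal I t = ∅ := by
        ext β
        simp [coIdeal, hall β]
      rw [he, Set.ncard_empty]
    have hr0 : r = 0 := by
      by_contra hr
      have h1 := hN N (le_refl N)
      rw [hH N] at h1
      have h2 := Fsum_pos (b := b) (Nat.pos_of_ne_zero hr) N
      omega
    subst hr0
    refine ⟨?_, ?_, ?_⟩
    · intro g hg
      have hgz : g = 0 := hg.2 0 g (by rw [zero_add]) h0
      rw [hgz, deg_zero]
    · intro t _
      rw [hH t]
      unfold Fsum
      simp
    · intro t
      unfold Fsum
      simp
  | succ n ih =>
    intro I hmon hB hne hs0 r b hb hHyp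
    obtain ⟨N, hN⟩ := hHyp
    classical
    -- the slice ideal J and its saturation K
    set J : Set (Expo n) := {β : Expo n | Fin.cons 0 β ∈ I} with hJdef
    have hJmon : IsMonIdeal J := by
      intro β hβ γ
      rw [hJdef, Set.mem_setOf_eq, cons_add]
      exact hmon _ hβ _
    have hJB : IsBorelSet J := fun β β' hβ hm => hB _ _ hβ (moveDown_cons hm)
    have hJne : J.Nonempty := by
      obtain ⟨α, hα⟩ := hne
      have hle : ∀ i, ((α 0) • sing 0) i ≤ α i := by
        intro i
        by_cases hi : (0 : Fin (n + 2)) = i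
        · subst hi; simp [sing]
        · simp [sing, Pi.single_apply, hi]
      have hsub := sub_add_cancel_expo hle
      have h1 : α - (α 0) • sing 0 ∈ I := sat0_iter hs0 (α 0) _ (by rw [hsub]; exact hα)
      have h2 : (α - (α 0) • sing 0 : Expo (n + 1)) 0 = 0 := by simp [sing]
      refine ⟨Fin.tail (α - (α 0) • sing 0), ?_⟩
      rw [hJdef, Set.mem_setOf_eq, cons_tail_eq h2]
      exact h1
    set K : Set (Expo n) := {β : Expo n | ∃ k : ℕ, β + k • sing 0 ∈ J} with hKdef
    have hJK : J ⊆ K := fun β hβ => ⟨0, by simpa using hβ⟩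
    have hKmon : IsMonIdeal K := by
      rintro β ⟨k, hk⟩ γ
      exact ⟨k, by rw [add_right_comm]; exact hJmon _ hk γ⟩
    have hKB : IsBorelSet K := by
      rintro β β' ⟨k, hk⟩ hm
      refine ⟨k, hJB _ _ hk ?_⟩
      obtain ⟨j, k', hjk, heq⟩ := hm
      exact ⟨j, k', hjk, by rw [add_right_comm, heq, add_right_comm]⟩
    have hKs0 : ∀ β : Expo n, β + sing 0 ∈ K → β ∈ K := by
      rintro β ⟨k, hk⟩
      refine ⟨k + 1, ?_⟩
      rw [succ_nsmul, ← add_assoc, add_right_comm]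
      exact hk
    have hKne : K.Nonempty := by
      obtain ⟨β, hβ⟩ := hJne
      exact ⟨β, hJK hβ⟩
    -- the gap between J and K is bounded in degree
    obtain ⟨T0, hT0⟩ := gap_bounded hJmon hJB
    set c : ℕ → ℕ := fun s => {β : Expo n | deg β = s ∧ β ∈ K ∧ β ∉ J}.ncard with hcdef
    have hDfin : ∀ s, {β : Expo n | deg β = s ∧ β ∈ K ∧ β ∉ J}.Finite :=
      fun s => (deg_finite s).subset fun β hβ => hβ.1
    have hczero : ∀ s, T0 ≤ s → c s = 0 := by
      intro s hs
      rw [hcdef]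
      have he : {β : Expo n | deg β = s ∧ β ∈ K ∧ β ∉ J} = ∅ := by
        rw [Set.eq_empty_iff_forall_notMem]
        rintro β ⟨h1, h2, h3⟩
        rw [hKdef, Set.mem_setOf_eq] at h2
        have := hT0 β h2 h3
        omega
      simp only []
      rw [he, Set.ncard_empty]
    have hHrec : ∀ t, (coIdeal I t).ncard
        = ∑ s ∈ Finset.range (t + 1), (coIdeal J s).ncard := fun t => Hsum hmon hs0 t
    have hHrec1 : ∀ t, (coIdeal I (t + 1)).ncard
        = (coIdeal I t).ncard + (coIdeal J (t + 1)).ncard := fun t => Hrec hmon hs0 t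
    have hHJsplit : ∀ s, (coIdeal J s).ncard = (coIdeal K s).ncard + c s :=
      fun s => Hsplit hJK s
    -- the positive part m of b
    set m := ((Finset.range r).filter fun i => 1 ≤ b i).card with hmdef
    have hmchar := antitone_filter_char hb r
    have hmr : m ≤ r := filter_card_le b r
    set b' : ℕ → ℕ := fun i => b i - 1 with hb'def
    have hb' : Antitone b' := fun i j hij => Nat.sub_le_sub_right (hb hij) 1
    have hpos : ∀ i, i < m → 1 ≤ b i := fun i hi => ((hmchar i).mp hi).2
    have hzero : ∀ i, m ≤ i → i < r → b i = 0 := by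
      intro i h1 h2
      by_contra h
      have := (hmchar i).mpr ⟨h2, by omega⟩
      omega
    set M0 := max N r with hM0def
    have hNM0 : N ≤ M0 := le_max_left N r
    have hrM0 : r ≤ M0 := le_max_right N r
    have hNle : ∀ t, M0 ≤ t → (coIdeal I t).ncard = Fsum b r t :=
      fun t ht => hN t (le_trans (le_max_left _ _) ht)
    -- eventual value of the Hilbert function of J
    have hHJev : ∀ s, M0 + 1 ≤ s → (coIdeal J s).ncard = Fsum b' m s := by
      intro s hs
      obtain ⟨t, rfl⟩ : ∃ t, s = t + 1 := ⟨s - 1, by omega⟩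
      have h1 := hHrec1 t
      have h2 := hNle t (by omega)
      have h3 := hNle (t + 1) (by omega)
      have h4 := Fsum_succ hmr hpos hzero (t := t) (fun i hi => by omega)
      rw [hb'def]
      omega
    have hHKev : ∀ s, max (M0 + 1) T0 ≤ s → (coIdeal K s).ncard = Fsum b' m s := by
      intro s hs
      have h6 : M0 + 1 ≤ max (M0 + 1) T0 := le_max_left _ _
      have h7 : T0 ≤ max (M0 + 1) T0 := le_max_right _ _
      have h1 := hHJsplit s
      have h2 := hczero s (by omega)
      have h3 := hHJev s (by omega)
      omega
    -- induction hypothesis applied to the saturation K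
    obtain ⟨ih1, ih2, ih3⟩ := ih K hKmon hKB hKne hKs0 m b' hb' ⟨max (M0 + 1) T0, hHKev⟩
    have hGeq : ∀ t, Fsum (fun i => b' i + 1) m t = Fsum b m t := fun t =>
      Fsum_congr (fun i hi => by have := hpos i hi; simp only [hb'def]; omega) t
    have hSGge : ∀ t, Fsum b m t ≤ ∑ s ∈ Finset.range (t + 1), (coIdeal K s).ncard :=
      fun t => by rw [← hGeq]; exact ih3 t
    have hGdelta : ∀ s, m - 1 ≤ s → Fsum b m (s + 1) = Fsum b m s + Fsum b' m (s + 1) := by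
      intro s hsm
      exact Fsum_succ (le_refl m) hpos (fun i h1 h2 => by omega) (fun i hi => by omega)
    set E := (∑ s ∈ Finset.range ((m - 1) + 1), (coIdeal K s).ncard) - Fsum b m (m - 1)
      with hEdef
    have hanchor : ∀ s, m - 1 ≤ s →
        ∑ u ∈ Finset.range (s + 1), (coIdeal K u).ncard = Fsum b m s + E := by
      intro s hs
      induction s, hs using Nat.le_induction with
      | base =>
        have := hSGge (m - 1)
        rw [hEdef]
        omega
      | succ s hs ihs =>
        rw [Finset.sum_range_succ, ihs, ih2 (s + 1) (by omega), hGdelta s hs]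
        ring
    set cT := ∑ u ∈ Finset.range T0, c u with hcT
    have hCc : ∀ s, T0 ≤ s + 1 → ∑ u ∈ Finset.range (s + 1), c u = cT := by
      intro s hs
      rw [hcT]
      exact (Finset.sum_subset (Finset.range_subset_range.mpr hs)
        (fun u _ hnu => hczero u (by simp only [Finset.mem_range] at hnu; omega))).symm
    have hHIform : ∀ t, (coIdeal I t).ncard
        = ∑ s ∈ Finset.range (t + 1), (coIdeal K s).ncard
          + ∑ u ∈ Finset.range (t + 1), c u := by
      intro t
      rw [hHrec t, Finset.sum_congr rfl (fun s _ => hHJsplit s), Finset.sum_add_distrib]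
    -- the key identity `r - m = E + cT`
    have hz : r - m = E + cT := by
      set t₁ := M0 + m + T0 + 1 with ht₁
      have h1 := hNle t₁ (by omega)
      have h2 := hHIform t₁
      have h3 := hanchor t₁ (by omega)
      have h4 := hCc t₁ (by omega)
      have h5 := Fsum_split hmr hzero t₁
      omega
    have hcTle : cT ≤ r - m := by omega
    -- decomposition of elements of K of degree > m
    have hdecomp : ∀ β : Expo n, β ∈ K → m < deg β →
        ∃ (h' : Expo n) (l : Fin (n + 1)), h' + sing l = β ∧ h' ∈ K := by
      intro β hβK hdegβ
      have hnotmin : ¬ IsMinGen K β := fun hmin => by have := ih1 β hmin; omega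
      have hdec : ∃ β' γ : Expo n, β' + γ = β ∧ β' ∈ K ∧ γ ≠ 0 := by
        by_contra hcon
        exact hnotmin ⟨hβK, fun β' γ h1 h2 =>
          Classical.byContradiction fun h3 => hcon ⟨β', γ, h1, h2, h3⟩⟩
      obtain ⟨β', γ, hsum, hβ'K, hγ⟩ := hdec
      obtain ⟨l, hl⟩ := exists_pos_of_ne_zero hγ
      have hsub := sub_add_cancel_expo (sing_le_of_pos hl)
      exact ⟨β' + (γ - sing l), l, by rw [add_assoc, hsub, hsum], hKmon β' hβ'K _⟩
    -- downward propagation of the gap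
    have hstepdown : ∀ u, m ≤ u → 1 ≤ c (u + 1) → 1 ≤ c u := by
      intro u hu hc1
      have hne1 : {β : Expo n | deg β = u + 1 ∧ β ∈ K ∧ β ∉ J}.Nonempty :=
        Set.nonempty_of_ncard_ne_zero (by rw [hcdef] at hc1; simp only [] at hc1; omega)
      obtain ⟨β, hβd, hβK, hβJ⟩ := hne1
      obtain ⟨h', l, h'sing, h'K⟩ := hdecomp β hβK (by omega)
      have h'J : h' ∉ J := fun hc => hβJ (by rw [← h'sing]; exact hJmon _ hc (sing l))
      have h'deg : deg h' = u := by
        have h1 := congrArg deg h'sing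
        rw [deg_add, deg_sing] at h1
        omega
      have hmem : h' ∈ {β : Expo n | deg β = u ∧ β ∈ K ∧ β ∉ J} := ⟨h'deg, h'K, h'J⟩
      have hpos' := (Set.ncard_pos (hDfin u)).mpr ⟨h', hmem⟩
      rw [hcdef]
      simp only []
      omega
    have hdown : ∀ (d u : ℕ), m ≤ u → 1 ≤ c (u + d) → 1 ≤ c u := by
      intro d
      induction d with
      | zero => intro u _ h; simpa using h
      | succ d ihd =>
        intro u hu h1
        have h2 : 1 ≤ c ((u + d) + 1) := by rw [show u + d + 1 = u + (d + 1) from by omega]; exact h1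
        exact ihd u hu (hstepdown (u + d) (by omega) h2)
    -- the gap vanishes from degree r on
    have hcr : ∀ s, r ≤ s → c s = 0 := by
      intro s hs
      by_contra hcs
      have hs1 : 1 ≤ c s := by omega
      have hall : ∀ u, m ≤ u → u ≤ s → 1 ≤ c u := fun u h1 h2 =>
        hdown (s - u) u h1 (by rw [show u + (s - u) = s from by omega]; exact hs1)
      have hsT0 : s < T0 := by
        by_contra hT
        have := hczero s (by omega)
        omega
      have hsum_ge : s + 1 - m ≤ cT := by
        rw [hcT]
        calc s + 1 - m = (Finset.Icc m s).card := by rw [Nat.card_Icc]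
          _ ≤ ∑ u ∈ Finset.Icc m s, c u := by
              have h := Finset.card_nsmul_le_sum (Finset.Icc m s) c 1
                (fun u hu => hall u (Finset.mem_Icc.mp hu).1 (Finset.mem_Icc.mp hu).2)
              simpa using h
          _ ≤ ∑ u ∈ Finset.range T0, c u := Finset.sum_le_sum_of_subset (by
              intro u hu
              simp only [Finset.mem_Icc, Finset.mem_range] at *
              omega)
      omega
    -- the first conclusion, for J
    have hminJ : ∀ g : Expo n, IsMinGen J g → deg g ≤ r := by
      intro g hg
      by_contra hgd
      push_neg at hgd
      have hgK := hJK hg.1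
      obtain ⟨h', l, h'sing, h'K⟩ := hdecomp g hgK (by omega)
      have h'deg : deg h' + 1 = deg g := by
        have h1 := congrArg deg h'sing
        rw [deg_add, deg_sing] at h1
        omega
      have h'J : h' ∈ J := by
        by_contra h'J
        have hmem : h' ∈ {β : Expo n | deg β = deg h' ∧ β ∈ K ∧ β ∉ J} := ⟨rfl, h'K, h'J⟩
        have hpos' := (Set.ncard_pos (hDfin (deg h'))).mpr ⟨h', hmem⟩
        have := hcr (deg h') (by omega)
        rw [hcdef] at this
        simp only [] at this
        omega
      have hzero' := hg.2 h' (sing l) h'sing h'J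
      have := congrFun hzero' l
      simp [sing] at this
    have conj1 : ∀ g : Expo (n + 1), IsMinGen I g → deg g ≤ r := by
      intro g hg
      have hg0 : g 0 = 0 := by
        by_contra h0
        have h1 : 1 ≤ g 0 := by omega
        have hsub := sub_add_cancel_expo (sing_le_of_pos h1)
        have hgI' : g - sing 0 ∈ I := hs0 _ (by rw [hsub]; exact hg.1)
        have hzero' := hg.2 (g - sing 0) (sing 0) hsub hgI'
        have := congrFun hzero' 0
        simp [sing] at this
      have htail : IsMinGen J (Fin.tail g) := by
        constructor
        · rw [hJdef, Set.mem_setOf_eq, cons_tail_eq hg0]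
          exact hg.1
        · intro β γ hsum hβ
          have h1 : Fin.cons 0 β + Fin.cons 0 γ = g := by
            rw [← cons_add, hsum, cons_tail_eq hg0]
          have hβI : Fin.cons 0 β ∈ I := hβ
          have h2 := hg.2 _ _ h1 hβI
          funext i
          have h3 := congrFun h2 i.succ
          simpa using h3
      have hdeg : deg (Fin.tail g) = deg g := by
        have h1 := deg_cons 0 (Fin.tail g)
        rw [cons_tail_eq hg0] at h1
        omega
      rw [← hdeg]
      exact hminJ _ htail
    -- the second conclusion
    have hHJr : ∀ s, r + 1 ≤ s → (coIdeal J s).ncard = Fsum b' m s := by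
      intro s hs
      have h1 := hHJsplit s
      have h2 := hcr s (by omega)
      have h3 := ih2 s (by omega)
      omega
    have conj2 : ∀ t, r ≤ t → (coIdeal I t).ncard = Fsum b r t := by
      have key : ∀ (k t : ℕ), r ≤ t → M0 ≤ t + k → (coIdeal I t).ncard = Fsum b r t := by
        intro k
        induction k with
        | zero => intro t ht hM; exact hNle t (by omega)
        | succ k ihk =>
          intro t ht hM
          by_cases hM' : M0 ≤ t
          · exact hNle t hM'
          · have h1 := ihk (t + 1) (by omega) (by omega)
            have h2 := hHrec1 t
            have h3 := hHJr (t + 1) (by omega)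
            have h4 := Fsum_succ hmr hpos hzero (t := t) (fun i hi => by omega)
            rw [← hb'def] at h4
            omega
      intro t ht
      exact key M0 t ht (by omega)
    -- the third conclusion
    have conj3 : ∀ t, Fsum (fun i => b i + 1) r t
        ≤ ∑ s ∈ Finset.range (t + 1), (coIdeal I s).ncard := by
      intro t
      have hsplit1 : Fsum (fun i => b i + 1) r t
          = Fsum (fun i => b i + 1) m t + ∑ j ∈ Finset.range (r - m), ((t + 1) - (m + j)) := by
        unfold Fsum
        rw [sum_range_split _ hmr]
        congr 1
        apply Finset.sum_congr rfl
        intro j hj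
        have hj' := Finset.mem_range.mp hj
        show (t + (b (m + j) + 1) - (m + j)).choose (b (m + j) + 1) = (t + 1) - (m + j)
        rw [hzero (m + j) (by omega) (by omega)]
        rw [Nat.choose_one_right]
      have hhockey : Fsum (fun i => b i + 1) m t = ∑ s ∈ Finset.range (t + 1), Fsum b m s :=
        (Fsum_hockey hpos t).symm
      have hSum : ∑ s ∈ Finset.range (t + 1), (coIdeal I s).ncard
          = ∑ s ∈ Finset.range (t + 1), (∑ u ∈ Finset.range (s + 1), (coIdeal K u).ncard)
            + ∑ s ∈ Finset.range (t + 1), (∑ u ∈ Finset.range (s + 1), c u) := by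
        rw [← Finset.sum_add_distrib]
        exact Finset.sum_congr rfl (fun s _ => hHIform s)
      have hSG : ∑ s ∈ Finset.range (t + 1), Fsum b m s + E * ((t + 1) - (m - 1))
          ≤ ∑ s ∈ Finset.range (t + 1), (∑ u ∈ Finset.range (s + 1), (coIdeal K u).ncard) := by
        rw [← indicator_sum (fun s => Fsum b m s) E m t]
        apply Finset.sum_le_sum
        intro s _
        by_cases hsm : m - 1 ≤ s
        · rw [if_pos hsm, ← hanchor s hsm]
        · rw [if_neg hsm, add_zero]
          exact hSGge s
      have hCcp : ∀ s, min cT ((s + 1) - m) ≤ ∑ u ∈ Finset.range (s + 1), c u := by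
        intro s
        by_cases hex : ∃ u0, s + 1 ≤ u0 ∧ 1 ≤ c u0
        · obtain ⟨u0, hu0, hcu0⟩ := hex
          by_cases hsm : m ≤ s
          · have hall : ∀ u, m ≤ u → u ≤ s → 1 ≤ c u := fun u h1 h2 =>
              hdown (u0 - u) u h1 (by rw [show u + (u0 - u) = u0 from by omega]; exact hcu0)
            calc min cT ((s + 1) - m) ≤ (s + 1) - m := min_le_right _ _
              _ = (Finset.Icc m s).card := by rw [Nat.card_Icc]
              _ ≤ ∑ u ∈ Finset.Icc m s, c u := by
                  have h := Finset.card_nsmul_le_sum (Finset.Icc m s) c 1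
                    (fun u hu => hall u (Finset.mem_Icc.mp hu).1 (Finset.mem_Icc.mp hu).2)
                  simpa using h
              _ ≤ ∑ u ∈ Finset.range (s + 1), c u := Finset.sum_le_sum_of_subset (by
                  intro u hu
                  simp only [Finset.mem_Icc, Finset.mem_range] at *
                  omega)
          · have h0 : (s + 1) - m = 0 := by omega
            rw [h0]
            simp
        · push_neg at hex
          have hcT_le : cT ≤ ∑ u ∈ Finset.range (s + 1), c u := by
            rcases le_or_gt T0 (s + 1) with h | h
            · rw [hcT]
              exact Finset.sum_le_sum_of_subset (Finset.range_subset_range.mpr h)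
            · have heq : ∑ u ∈ Finset.range (s + 1), c u = ∑ u ∈ Finset.range T0, c u :=
                Finset.sum_subset (Finset.range_subset_range.mpr (le_of_lt h))
                  (fun u _ hnu => by
                    have h5 := hex u (by simp only [Finset.mem_range] at hnu; omega)
                    omega)
              rw [hcT, heq]
          exact le_trans (min_le_left _ _) hcT_le
      have hCcsum : ∑ s ∈ Finset.range (t + 1), min cT ((s + 1) - m)
          ≤ ∑ s ∈ Finset.range (t + 1), (∑ u ∈ Finset.range (s + 1), c u) :=
        Finset.sum_le_sum (fun s _ => hCcp s)
      have htail2 : ∑ j ∈ Finset.range (r - m), ((t + 1) - (m + j))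
          ≤ E * ((t + 1) - (m - 1)) + ∑ s ∈ Finset.range (t + 1), min cT ((s + 1) - m) := by
        rw [hz, Finset.sum_range_add]
        have h1 := arith_e2 m E t
        have h2 : ∑ j ∈ Finset.range cT, ((t + 1) - (m + (E + j)))
            ≤ ∑ s ∈ Finset.range (t + 1), min cT ((s + 1) - m) := by
          calc ∑ j ∈ Finset.range cT, ((t + 1) - (m + (E + j)))
              = ∑ j ∈ Finset.range cT, ((t + 1) - (m + E + j)) := by
                apply Finset.sum_congr rfl
                intro j _
                omega
            _ ≤ _ := arith_e3 m E cT t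
        omega
      calc Fsum (fun i => b i + 1) r t
          = ∑ s ∈ Finset.range (t + 1), Fsum b m s
            + ∑ j ∈ Finset.range (r - m), ((t + 1) - (m + j)) := by rw [hsplit1, hhockey]
        _ ≤ ∑ s ∈ Finset.range (t + 1), Fsum b m s
            + (E * ((t + 1) - (m - 1)) + ∑ s ∈ Finset.range (t + 1), min cT ((s + 1) - m)) :=
            Nat.add_le_add_left htail2 _
        _ ≤ ∑ s ∈ Finset.range (t + 1), (∑ u ∈ Finset.range (s + 1), (coIdeal K u).ncard)
            + ∑ s ∈ Finset.range (t + 1), (∑ u ∈ Finset.range (s + 1), c u) := by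
            have := hSG
            have := hCcsum
            omega
        _ = ∑ s ∈ Finset.range (t + 1), (coIdeal I s).ncard := hSum.symm
    exact ⟨conj1, conj2, conj3⟩

end Master
/-- For a nonzero saturated Borel ideal `I` and a term order `≺`:
segment ideal ⟹ hilb-segment ideal ⟹ reg-segment ideal ⟹ gen-segment ideal,
where `r` is the Gotzmann number of the Hilbert polynomial of `I` and `δ` is the
maximal degree of a minimal generator of `I`. -/
theorem segment_implications {n : ℕ} (I : Set (Expo n)) (hI : IsBorelIdeal I)
    (hne : I.Nonempty) (hsat : IsSaturatedIdeal I) (ord : TermOrder n)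
    (p : Polynomial ℚ) (hp : HasHilbPoly I p)
    (r : ℕ) (hr : IsGotzmannDecomp p r)
    (δ : ℕ) (hδ : IsMaxGenDeg I δ) :
    (IsSegmentIdeal ord.lt I → IsSegmentAt ord.lt I r) ∧
    (IsSegmentAt ord.lt I r → IsSegmentAt ord.lt I δ) ∧
    (IsSegmentAt ord.lt I δ → IsGenSegment ord.lt I) := by
  classical
  obtain ⟨hmon, hB⟩ := hI
  have hs0 := sat0_of_saturated hB hsat
  obtain ⟨a, haanti, ha⟩ := hr
  obtain ⟨N, hN⟩ := hp
  set b : ℕ → ℕ := fun i => if h : i < r then a ⟨i, h⟩ else 0 with hbdef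
  have hbanti : Antitone b := by
    intro i j hij
    simp only [hbdef]
    split_ifs with h1 h2
    · exact haanti (show (⟨i, h2⟩ : Fin r) ≤ ⟨j, h1⟩ from hij)
    · omega
    · exact Nat.zero_le _
    · exact le_refl 0
  have hHF : ∀ t, max N r ≤ t → (coIdeal I t).ncard = Fsum b r t := by
    intro t ht
    have h1 := hN t (le_trans (le_max_left _ _) ht)
    have h2 := ha t (le_trans (le_max_right _ _) ht)
    rw [h2] at h1
    have h3 : ((Fsum b r t : ℕ) : ℚ)
        = ∑ i : Fin r, (((t + a i - (i : ℕ)).choose (a i) : ℕ) : ℚ) := by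
      rw [show Fsum b r t = ∑ i ∈ Finset.range r, (t + b i - i).choose (b i) from rfl,
        ← Fin.sum_univ_eq_sum_range (fun k => (t + b k - k).choose (b k)) r]
      rw [Nat.cast_sum]
      apply Finset.sum_congr rfl
      intro i _
      have hb_eq : b (i : ℕ) = a i := by
        simp only [hbdef]
        rw [dif_pos i.isLt]
      rw [hb_eq]
    rw [← h3] at h1
    exact_mod_cast h1
  obtain ⟨hconj1, -, -⟩ := master n I hmon hB hne hs0 r b hbanti ⟨max N r, hHF⟩
  obtain ⟨⟨g, hg, hgdeg⟩, hδub⟩ := hδ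
  have hδr : δ ≤ r := by rw [← hgdeg]; exact hconj1 g hg
  refine ⟨fun hseg => hseg r, ?_, ?_⟩
  · intro hseg
    exact downSegIter hmon hsat ord.lt ord.add_right (r - δ) δ
      (by rw [show δ + (r - δ) = r from by omega]; exact hseg)
  · intro hseg α hα σ hσdeg hσnotbelow hσnotmin
    have hαdegδ : deg α ≤ δ := hδub α hα
    have hsegs : IsSegmentAt ord.lt I (deg α) :=
      downSegIter hmon hsat ord.lt ord.add_right (δ - deg α) (deg α)
        (by rw [show deg α + (δ - deg α) = δ from by omega]; exact hseg)
    by_cases heq : σ = α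
    · exact absurd (by rw [heq]; exact hα) hσnotmin
    rcases ord.total σ α heq with h | h
    · exact h
    · exfalso
      have hσI : σ ∈ I := hsegs α σ hα.1 rfl hσdeg h
      have hdec : ∃ β γ : Expo n, β + γ = σ ∧ β ∈ I ∧ γ ≠ 0 := by
        by_contra hcon
        exact hσnotmin ⟨hσI, fun β γ h1 h2 =>
          Classical.byContradiction fun h3 => hcon ⟨β, γ, h1, h2, h3⟩⟩
      obtain ⟨β, γ, h1, h2, h3⟩ := hdec
      apply hσnotbelow
      refine ⟨β, γ, h2, ?_, h1.symm⟩
      have h4 := congrArg deg h1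
      rw [deg_add] at h4
      have h5 : deg γ ≠ 0 := fun h => h3 (eq_zero_of_deg_eq_zero h)
      omega
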